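/- Let T(ρ) = (1_d − m·M(ρ))/(d−m) where M is a positive linear trace-preserving map and there exists ρ₀ with m·M(ρ₀) an orthogonal projection of rank m. Then the maximal output operator norm sup_ρ ‖T(ρ)‖_∞ is attained at an output state which is a normalized projection, and equals 1/(d−m). -/

import Mathlib

open Matrix BigOperators
open scoped ComplexOrder

noncomputable section

variable {n : Type*} [Fintype n] [DecidableEq n]

/-- A density matrix: positive semidefinite with unit trace. -/
def IsDensity (ρ : Matrix n n ℂ) : Prop := ρ.PosSemidef ∧ ρ.trace = 1

/-- `tr(ρ^α)` via functional calculus (powers of eigenvalues, with `0^α := 0`). -/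
noncomputable def trPow (ρ : Matrix n n ℂ) (α : ℝ) : ℝ :=
  if h : ρ.IsHermitian then ∑ i, if h.eigenvalues i = 0 then 0 else (h.eigenvalues i) ^ α else 0

/-- The von Neumann entropy `-tr(ρ log ρ)` (base-2 logarithm). -/
noncomputable def vN (ρ : Matrix n n ℂ) : ℝ :=
  if h : ρ.IsHermitian then -∑ i, (h.eigenvalues i) * Real.logb 2 (h.eigenvalues i) else 0

/-- The Renyi α-entropy, with the von Neumann entropy at α = 1. -/
noncomputable def renyi (ρ : Matrix n n ℂ) (α : ℝ) : ℝ :=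
  if α = 1 then vN ρ else (1 - α)⁻¹ * Real.logb 2 (trPow ρ α)

/-- Largest eigenvalue (operator norm for positive semidefinite matrices). -/
noncomputable def maxEig (A : Matrix n n ℂ) : ℝ :=
  if h : A.IsHermitian then ⨆ i, h.eigenvalues i else 0

/-- An orthogonal projection. -/
def IsProjection (P : Matrix n n ℂ) : Prop := P.IsHermitian ∧ P * P = P

/-- A normalized projection `P / rank P`. -/
def IsNormalizedProjection (ρ : Matrix n n ℂ) : Prop :=
  ∃ P : Matrix n n ℂ, IsProjection P ∧ ρ = ((P.rank : ℂ))⁻¹ • P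

def TracePreserving (T : Matrix n n ℂ → Matrix n n ℂ) : Prop :=
  ∀ X, (T X).trace = X.trace

def PositiveMap (T : Matrix n n ℂ → Matrix n n ℂ) : Prop :=
  ∀ X, X.PosSemidef → (T X).PosSemidef

/-- The ampliation `T ⊗ id` acting blockwise. -/
def ampl (T : Matrix n n ℂ → Matrix n n ℂ) {k : Type*} [Fintype k] [DecidableEq k]
    (X : Matrix (n × k) (n × k) ℂ) : Matrix (n × k) (n × k) ℂ :=
  fun p q => T (fun a b => X (a, p.2) (b, q.2)) p.1 q.1

def CompletelyPositive (T : Matrix n n ℂ → Matrix n n ℂ) : Prop :=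
  ∀ (N : ℕ) (X : Matrix (n × Fin N) (n × Fin N) ℂ), X.PosSemidef → (ampl T X).PosSemidef

def IsChannel (T : Matrix n n ℂ → Matrix n n ℂ) : Prop :=
  IsLinearMap ℂ T ∧ CompletelyPositive T ∧ TracePreserving T

/-- Minimal output Renyi α-entropy. -/
noncomputable def minOut (T : Matrix n n ℂ → Matrix n n ℂ) (α : ℝ) : ℝ :=
  sInf {x | ∃ ρ, IsDensity ρ ∧ x = renyi (T ρ) α}

/-- Maximal output von Neumann entropy. -/
noncomputable def maxVN (T : Matrix n n ℂ → Matrix n n ℂ) : ℝ :=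
  sSup {x | ∃ ρ, IsDensity ρ ∧ x = vN (T ρ)}

/-- Holevo capacity. -/
noncomputable def holevoCap (T : Matrix n n ℂ → Matrix n n ℂ) : ℝ :=
  sSup {x | ∃ (k : ℕ) (p : Fin k → ℝ) (σ : Fin k → Matrix n n ℂ),
    (∀ i, 0 ≤ p i) ∧ (∑ i, p i = 1) ∧ (∀ i, IsDensity (σ i)) ∧
    x = vN (T (∑ i, (p i : ℂ) • σ i)) - ∑ i, p i * vN (T (σ i))}

/-- Tensor product of matrices indexed by a finite family. -/
def tensorMatrix {N : ℕ} {d : Fin N → Type*} [∀ i, Fintype (d i)] [∀ i, DecidableEq (d i)]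
    (A : ∀ i, Matrix (d i) (d i) ℂ) : Matrix (∀ i, d i) (∀ i, d i) ℂ :=
  fun p q => ∏ i, A i (p i) (q i)

/-- The flip (swap) operator on `ℂ^n ⊗ ℂ^n`. -/
def flipMat : Matrix (n × n) (n × n) ℂ :=
  fun p q => if p.1 = q.2 ∧ p.2 = q.1 then 1 else 0

/-- Partial transpose on the second tensor factor. -/
def pt2 {a b : Type*} (X : Matrix (a × b) (a × b) ℂ) : Matrix (a × b) (a × b) ℂ :=
  fun p q => X (p.1, q.2) (q.1, p.2)

end


section AuxLemmas

open Matrix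
open scoped ComplexOrder

variable {n : Type*} [Fintype n] [DecidableEq n]

private lemma aux_unit {A : Matrix n n ℂ} (hA : A.IsHermitian) (i : n) :
    star ⇑(hA.eigenvectorBasis i) ⬝ᵥ ⇑(hA.eigenvectorBasis i) = 1 := by
  rw [dotProduct_comm, ← EuclideanSpace.inner_eq_star_dotProduct, inner_self_eq_norm_sq_to_K,
    hA.eigenvectorBasis.orthonormal.1 i]
  norm_num

private lemma herm_real_smul (r : ℝ) {A : Matrix n n ℂ} (hA : A.IsHermitian) :
    ((r : ℂ) • A).IsHermitian := by
  unfold Matrix.IsHermitian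
  rw [conjTranspose_smul, hA]
  simp [Complex.conj_ofReal]

private lemma psd_real_smul {A : Matrix n n ℂ} (hA : A.PosSemidef) {r : ℝ} (hr : 0 ≤ r) :
    ((r : ℂ) • A).PosSemidef := by
  have h1 : (0 : ℂ) ≤ (r : ℂ) := by exact_mod_cast hr
  exact hA.smul h1

private lemma trace_eq_sum_eigs {A : Matrix n n ℂ} (hA : A.IsHermitian) :
    A.trace = ∑ i, (hA.eigenvalues i : ℂ) := by
  exact hA.trace_eq_sum_eigenvalues

private lemma maxEig_le_aux [Nonempty n] {A : Matrix n n ℂ} (hA : A.IsHermitian) {c : ℝ}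
    (h : ((c : ℂ) • (1 : Matrix n n ℂ) - A).PosSemidef) : maxEig A ≤ c := by
  rw [maxEig, dif_pos hA]
  refine ciSup_le fun i => ?_
  have h2 := h.re_dotProduct_nonneg ⇑(hA.eigenvectorBasis i)
  rw [sub_mulVec, smul_mulVec, one_mulVec, dotProduct_sub, dotProduct_smul,
    smul_eq_mul, aux_unit hA i, mul_one, map_sub] at h2
  have h3 := hA.eigenvalues_eq i
  have h4 : RCLike.re ((c : ℂ)) = c := by simp
  rw [h4, ← h3] at h2
  linarith

private lemma le_maxEig_aux {A : Matrix n n ℂ} (hA : A.IsHermitian) (i : n) :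
    hA.eigenvalues i ≤ maxEig A := by
  rw [maxEig, dif_pos hA]
  exact le_ciSup (Set.Finite.bddAbove (Set.finite_range _)) i

private lemma eig_dichotomy {A : Matrix n n ℂ} (hA : A.IsHermitian) {c : ℝ}
    (h : A * A = (c : ℂ) • A) (i : n) : hA.eigenvalues i = 0 ∨ hA.eigenvalues i = c := by
  have hv := hA.mulVec_eigenvectorBasis i
  set v := ⇑(hA.eigenvectorBasis i) with hvdef
  have hv0 : v ≠ 0 := by
    intro h0
    have h1 := aux_unit hA i
    rw [← hvdef, h0] at h1
    simp [dotProduct] at h1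
  obtain ⟨j, hj⟩ : ∃ j, v j ≠ 0 := Function.ne_iff.mp hv0
  have key : A *ᵥ (A *ᵥ v) = ((c : ℂ) • A) *ᵥ v := by rw [mulVec_mulVec, h]
  rw [hv, mulVec_smul, hv, smul_mulVec, hv] at key
  have key2 := congrFun key j
  simp only [Pi.smul_apply, smul_eq_mul, Complex.real_smul] at key2
  rw [← mul_assoc, ← mul_assoc] at key2
  have key3 : (hA.eigenvalues i : ℂ) * (hA.eigenvalues i) = (c : ℂ) * (hA.eigenvalues i) :=
    mul_right_cancel₀ hj key2
  have key4 : hA.eigenvalues i * hA.eigenvalues i = c * hA.eigenvalues i := by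
    exact_mod_cast key3
  rcases eq_or_ne (hA.eigenvalues i) 0 with h0 | h0
  · exact Or.inl h0
  · exact Or.inr (mul_right_cancel₀ h0 key4)

end AuxLemmas

/-- for `T(ρ) = (1 - m M(ρ))/(d-m)` the maximal output operator norm is
attained at a normalized projection and equals `1/(d-m)`. -/
theorem maxOutputNorm_attained_at_projection {d m : ℕ} (hm : 1 ≤ m) (hmd : m < d)
    (M : Matrix (Fin d) (Fin d) ℂ → Matrix (Fin d) (Fin d) ℂ)
    (hlin : IsLinearMap ℂ M) (hTP : TracePreserving M) (hpos : PositiveMap M)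
    (hproj : ∃ ρ₀, IsDensity ρ₀ ∧ IsProjection ((m : ℂ) • M ρ₀) ∧ ((m : ℂ) • M ρ₀).rank = m)
    (T : Matrix (Fin d) (Fin d) ℂ → Matrix (Fin d) (Fin d) ℂ)
    (hTdef : ∀ ρ, T ρ = ((d : ℂ) - (m : ℂ))⁻¹ • (1 - (m : ℂ) • M ρ)) :
    (∀ ρ, IsDensity ρ → maxEig (T ρ) ≤ ((d : ℝ) - (m : ℝ))⁻¹) ∧
    (∃ ρ, IsDensity ρ ∧ IsNormalizedProjection (T ρ) ∧
      maxEig (T ρ) = ((d : ℝ) - (m : ℝ))⁻¹) := by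
  
  haveI : Nonempty (Fin d) := ⟨⟨0, by omega⟩⟩
  have hmdR : (m : ℝ) < (d : ℝ) := by exact_mod_cast hmd
  have hdm : (0 : ℝ) < (d : ℝ) - m := by linarith
  have hcast : ((d : ℂ) - (m : ℂ)) = (((d : ℝ) - m : ℝ) : ℂ) := by push_cast; ring
  set e : ℝ := ((d : ℝ) - (m : ℝ))⁻¹ with he
  have hepos : 0 < e := inv_pos.mpr hdm
  have hecast : ((d : ℂ) - (m : ℂ))⁻¹ = (e : ℂ) := by
    rw [hcast, he, Complex.ofReal_inv]
  have part1 : ∀ ρ, IsDensity ρ → maxEig (T ρ) ≤ e := by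
    intro ρ hρ
    have hM : (M ρ).PosSemidef := hpos ρ hρ.1
    have hmM : ((m : ℂ) • M ρ).PosSemidef := by
      have := psd_real_smul hM (Nat.cast_nonneg m : (0:ℝ) ≤ m)
      simpa using this
    have hHerm : (T ρ).IsHermitian := by
      rw [hTdef, hecast]
      exact herm_real_smul e (Matrix.isHermitian_one.sub hmM.1)
    have hps : ((e : ℂ) • (1 : Matrix (Fin d) (Fin d) ℂ) - T ρ).PosSemidef := by
      have heq : (e : ℂ) • (1 : Matrix (Fin d) (Fin d) ℂ) - T ρ
          = (e : ℂ) • ((m : ℂ) • M ρ) := by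
        rw [hTdef, hecast, smul_sub, sub_sub_cancel]
      rw [heq]
      have := psd_real_smul hmM hepos.le
      simpa using this
    exact maxEig_le_aux hHerm hps
  obtain ⟨ρ₀, hρ₀, hPproj, hPrank⟩ := hproj
  set P : Matrix (Fin d) (Fin d) ℂ := (m : ℂ) • M ρ₀ with hPdef
  set Q : Matrix (Fin d) (Fin d) ℂ := (1 : Matrix (Fin d) (Fin d) ℂ) - P with hQdef
  have hQproj : IsProjection Q := by
    refine ⟨Matrix.isHermitian_one.sub hPproj.1, ?_⟩
    rw [hQdef, sub_mul, mul_sub, mul_sub, hPproj.2]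
    simp only [one_mul, mul_one]
    abel
  have hTrho : T ρ₀ = (e : ℂ) • Q := by rw [hTdef, hecast, hQdef, hPdef]
  have hQH := hQproj.1
  have hAH : (T ρ₀).IsHermitian := by rw [hTrho]; exact herm_real_smul e hQH
  have htrM : (M ρ₀).trace = 1 := by rw [hTP ρ₀, hρ₀.2]
  have htrQ : Q.trace = (d : ℂ) - m := by
    rw [hQdef, trace_sub, trace_one, hPdef, trace_smul, htrM, smul_eq_mul, mul_one]
    simp [Fintype.card_fin]
  have hQQ : Q * Q = (((1 : ℝ) : ℂ)) • Q := by rw [hQproj.2]; simp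
  have hdich := fun i => eig_dichotomy hQH hQQ i
  have hsum : ∑ i, hQH.eigenvalues i = (d : ℝ) - m := by
    have h3 : (∑ i, (hQH.eigenvalues i : ℂ)) = (d : ℂ) - m := (trace_eq_sum_eigs hQH) ▸ htrQ
    exact_mod_cast h3
  have hrankQ : Q.rank = d - m := by
    have hcard := hQH.rank_eq_card_non_zero_eigs
    have hcR : ((Fintype.card {i // hQH.eigenvalues i ≠ 0} : ℝ)) = ∑ i, hQH.eigenvalues i := by
      rw [Fintype.card_subtype, Finset.card_filter]
      push_cast
      refine Finset.sum_congr rfl fun i _ => ?_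
      rcases hdich i with h0 | h1
      · simp [h0]
      · simp [h1]
    rw [hsum] at hcR
    have hfin : ((Fintype.card {i // hQH.eigenvalues i ≠ 0} : ℝ)) = ((d - m : ℕ) : ℝ) := by
      rw [hcR, Nat.cast_sub hmd.le]
    rw [hcard]
    exact_mod_cast hfin
  refine ⟨part1, ρ₀, hρ₀, ⟨Q, hQproj, ?_⟩, ?_⟩
  · rw [hTrho, hrankQ]
    congr 1
    rw [he, Complex.ofReal_inv]
    congr 1
    push_cast [Nat.cast_sub hmd.le]
    ring
  · have hle := part1 ρ₀ hρ₀
    have hAA : T ρ₀ * T ρ₀ = (e : ℂ) • T ρ₀ := by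
      rw [hTrho, smul_mul_smul_comm, hQproj.2, smul_smul]
    have hdA := fun i => eig_dichotomy hAH hAA i
    have htrA : (T ρ₀).trace = 1 := by
      rw [hTrho, trace_smul, htrQ, smul_eq_mul, hcast, ← Complex.ofReal_mul,
        inv_mul_cancel₀ hdm.ne', Complex.ofReal_one]
    have hsumA : ∑ i, hAH.eigenvalues i = 1 := by
      have h3 : (∑ i, (hAH.eigenvalues i : ℂ)) = 1 := (trace_eq_sum_eigs hAH) ▸ htrA
      exact_mod_cast h3
    have hex : ∃ i, hAH.eigenvalues i = e := by
      by_contra hc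
      push_neg at hc
      have hz : ∀ i, hAH.eigenvalues i = 0 := fun i => (hdA i).resolve_right (hc i)
      simp [hz] at hsumA
    obtain ⟨i, hi⟩ := hex
    have hge := le_maxEig_aux hAH i
    rw [hi] at hge
    exact le_antisymm hle hge
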